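/- Let A be a Hermitian complex n×n matrix, B any complex n×n matrix, and x ∈ ℝ. Then ‖exp(iAx) B exp(−iAx) − B − i x [A, B]‖ ≤ 2 ‖A‖² ‖B‖ x², where [A, B] = AB − BA, exp is the matrix exponential, and ‖·‖ is the operator norm (largest singular value). (This is the second-order Taylor estimate underlying the density-matrix-exponentiation simulation step.) -/

import Mathlib

set_option maxHeartbeats 1000000
set_option synthInstance.maxHeartbeats 200000

open NormedSpace

variable {𝓐 : Type*} [NormedRing 𝓐] [NormedAlgebra ℝ 𝓐] [CompleteSpace 𝓐]

/-- Derivative of the conjugation `t ↦ exp(t s) c exp(-t s)`. -/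
lemma conj_hasDerivAt (s c : 𝓐) (t : ℝ) :
    HasDerivAt (fun u : ℝ => exp (u • s) * c * exp (u • (-s)))
      (exp (t • s) * (s * c - c * s) * exp (t • (-s))) t := by
  have h1 : HasDerivAt (fun u : ℝ => exp (u • s)) (s * exp (t • s)) t :=
    hasDerivAt_exp_smul_const' (𝕂 := ℝ) s t
  have h2 : HasDerivAt (fun u : ℝ => exp (u • (-s))) (exp (t • (-s)) * (-s)) t :=
    hasDerivAt_exp_smul_const (𝕂 := ℝ) (-s) t
  have h3 := (h1.mul_const c).mul h2
  convert h3 using 1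
  · rfl
  have hUs : exp (t • s) * s = s * exp (t • s) :=
    (((Commute.refl s).smul_left t).exp_left).eq
  have hVs : exp (t • (-s)) * s = s * exp (t • (-s)) :=
    ((((Commute.refl s).neg_left).smul_left t).exp_left).eq
  set U := exp (t • s)
  set V := exp (t • (-s))
  calc U * (s * c - c * s) * V
      = (U * s) * c * V - U * c * (V * s) := by noncomm_ring [hVs]
    _ = s * U * c * V + U * c * (V * -s) := by rw [hUs]; noncomm_ring

lemma conj_norm_le (s c : 𝓐) (hU : ∀ t : ℝ, ‖exp (t • s)‖ ≤ 1) (t : ℝ) :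
    ‖exp (t • s) * c * exp (t • (-s))‖ ≤ ‖c‖ := by
  have hV : ‖exp (t • (-s))‖ ≤ 1 := by
    have := hU (-t)
    rwa [neg_smul, ← smul_neg] at this
  have h1 := norm_mul_le (exp (t • s) * c) (exp (t • (-s)))
  have h2 := norm_mul_le (exp (t • s)) c
  nlinarith [norm_nonneg c, norm_nonneg (exp (t • s) * c), hU t, hV,
    norm_nonneg (exp (t • s)), norm_nonneg (exp (t • (-s)))]

/-- First-order estimate: `‖exp(ts) c exp(-ts) - c‖ ≤ 2‖s‖‖c‖|t|`. -/
lemma conj_sub_le (s c : 𝓐) (hU : ∀ t : ℝ, ‖exp (t • s)‖ ≤ 1) (t : ℝ) :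
    ‖exp (t • s) * c * exp (t • (-s)) - c‖ ≤ 2 * ‖s‖ * ‖c‖ * |t| := by
  have h0 : exp ((0:ℝ) • s) * c * exp ((0:ℝ) • (-s)) = c := by
    simp [exp_zero]
  have := Convex.norm_image_sub_le_of_norm_hasDerivWithin_le
    (f := fun u : ℝ => exp (u • s) * c * exp (u • (-s)))
    (f' := fun u : ℝ => exp (u • s) * (s * c - c * s) * exp (u • (-s)))
    (s := Set.univ) (C := 2 * ‖s‖ * ‖c‖)
    (fun u _ => (conj_hasDerivAt s c u).hasDerivWithinAt)
    (fun u _ => by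
      calc ‖exp (u • s) * (s * c - c * s) * exp (u • (-s))‖
          ≤ ‖s * c - c * s‖ := conj_norm_le s _ hU u
        _ ≤ ‖s * c‖ + ‖c * s‖ := norm_sub_le _ _
        _ ≤ ‖s‖ * ‖c‖ + ‖c‖ * ‖s‖ := add_le_add (norm_mul_le _ _) (norm_mul_le _ _)
        _ = 2 * ‖s‖ * ‖c‖ := by ring)
    convex_univ (Set.mem_univ (0:ℝ)) (Set.mem_univ t)
  simpa [Real.norm_eq_abs] using this

/-- The key second-order Taylor estimate for `x ≥ 0`. -/
lemma key_est (s b : 𝓐) (hU : ∀ t : ℝ, ‖exp (t • s)‖ ≤ 1) {x : ℝ} (hx : 0 ≤ x) :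
    ‖exp (x • s) * b * exp (x • (-s)) - b - x • (s * b - b * s)‖ ≤
      2 * ‖s‖ ^ 2 * ‖b‖ * x ^ 2 := by
  set c := s * b - b * s with hc
  set g : ℝ → 𝓐 := fun u => exp (u • s) * b * exp (u • (-s)) - b - u • c with hg
  have hg' : ∀ u : ℝ, HasDerivAt g
      (exp (u • s) * c * exp (u • (-s)) - c) u := by
    intro u
    have h := ((conj_hasDerivAt s b u).sub_const b).sub ((hasDerivAt_id u).smul_const c)
    simp only [one_smul, ← hc] at h
    exact h.congr_of_eventuallyEq (Filter.Eventually.of_forall fun v => rfl)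
  have hbound : ∀ u ∈ Set.Ico (0:ℝ) x,
      ‖exp (u • s) * c * exp (u • (-s)) - c‖ ≤ 4 * ‖s‖ ^ 2 * ‖b‖ * u := by
    intro u hu
    have h1 := conj_sub_le s c hU u
    have h2 : ‖c‖ ≤ 2 * ‖s‖ * ‖b‖ := by
      calc ‖c‖ ≤ ‖s * b‖ + ‖b * s‖ := norm_sub_le _ _
        _ ≤ ‖s‖ * ‖b‖ + ‖b‖ * ‖s‖ := add_le_add (norm_mul_le _ _) (norm_mul_le _ _)
        _ = 2 * ‖s‖ * ‖b‖ := by ring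
    have habs : |u| = u := abs_of_nonneg hu.1
    calc ‖exp (u • s) * c * exp (u • (-s)) - c‖
        ≤ 2 * ‖s‖ * ‖c‖ * |u| := h1
      _ ≤ 2 * ‖s‖ * (2 * ‖s‖ * ‖b‖) * |u| := by
          gcongr <;> positivity
      _ = 4 * ‖s‖ ^ 2 * ‖b‖ * u := by rw [habs]; ring
  have hB : ∀ u : ℝ, HasDerivAt (fun u : ℝ => 2 * ‖s‖ ^ 2 * ‖b‖ * u ^ 2)
      (4 * ‖s‖ ^ 2 * ‖b‖ * u) u := by
    intro u
    have := ((hasDerivAt_pow 2 u).const_mul (2 * ‖s‖ ^ 2 * ‖b‖))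
    exact this.congr_deriv (by ring)
  have main := image_norm_le_of_norm_deriv_right_le_deriv_boundary
    (f := g) (f' := fun u => exp (u • s) * c * exp (u • (-s)) - c)
    (a := 0) (b := x)
    (B := fun u => 2 * ‖s‖ ^ 2 * ‖b‖ * u ^ 2)
    (B' := fun u => 4 * ‖s‖ ^ 2 * ‖b‖ * u)
    (fun u _ => (hg' u).continuousAt.continuousWithinAt)
    (fun u _ => (hg' u).hasDerivWithinAt)
    (by simp [hg, exp_zero])
    hB hbound
  have := main (Set.right_mem_Icc.mpr hx)
  simpa [hg] using this

section main

open Complex NormedSpace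

/-- The operator norm of a complex square matrix (largest singular value),
    i.e. the norm of the associated operator on Euclidean space. -/
noncomputable def opNorm {n : ℕ} (A : Matrix (Fin n) (Fin n) ℂ) : ℝ :=
  ‖Matrix.toEuclideanCLM (𝕜 := ℂ) A‖

/-- Second-order Taylor estimate: for Hermitian `A`, any `B`, and `x ∈ ℝ`,
    `‖exp(iAx) B exp(−iAx) − B − i x [A,B]‖ ≤ 2 ‖A‖² ‖B‖ x²`. -/
theorem stmt7 {n : ℕ} (A B : Matrix (Fin n) (Fin n) ℂ)
    (hA : A.IsHermitian) (x : ℝ) :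
    opNorm (NormedSpace.exp ((Complex.I * x) • A) * B *
              NormedSpace.exp (-((Complex.I * x) • A)) -
            B - (Complex.I * x) • (A * B - B * A)) ≤
      2 * opNorm A ^ 2 * opNorm B * x ^ 2 := by

  classical
  set Φ := Matrix.toEuclideanCLM (𝕜 := ℂ) (n := Fin n) with hΦ
  -- Φ as a continuous linear equiv
  let lin : Matrix (Fin n) (Fin n) ℂ ≃ₗ[ℂ] (EuclideanSpace ℂ (Fin n) →L[ℂ] EuclideanSpace ℂ (Fin n)) :=
    { toFun := Φ
      map_add' := map_add Φ
      map_smul' := map_smul Φ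
      invFun := Φ.symm
      left_inv := Φ.symm_apply_apply
      right_inv := Φ.apply_symm_apply }
  let eL : Matrix (Fin n) (Fin n) ℂ ≃L[ℂ] (EuclideanSpace ℂ (Fin n) →L[ℂ] EuclideanSpace ℂ (Fin n)) :=
    lin.toContinuousLinearEquiv
  have heL : ∀ M, eL M = Φ M := fun _ => rfl
  have hmap : ∀ M : Matrix (Fin n) (Fin n) ℂ,
      Φ (NormedSpace.exp M) = NormedSpace.exp (Φ M) := by
    intro M
    rw [NormedSpace.exp_eq_tsum ℂ, NormedSpace.exp_eq_tsum ℂ]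
    rw [← heL]
    rw [eL.map_tsum]
    refine tsum_congr fun k => ?_
    rw [heL, map_smul, map_pow]
  set a := Φ A with ha'
  set b := Φ B with hb'
  have ha : IsSelfAdjoint a := by
    rw [IsSelfAdjoint, ← map_star, Matrix.star_eq_conjTranspose, hA.eq]
  set s : EuclideanSpace ℂ (Fin n) →L[ℂ] EuclideanSpace ℂ (Fin n) := Complex.I • a with hs
  have hU : ∀ t : ℝ, ‖NormedSpace.exp (t • s)‖ ≤ 1 := by
    intro t
    set u := NormedSpace.exp (t • s) with hu
    have hts : t • s = ((t : ℂ) * Complex.I) • a := by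
      rw [mul_smul, hs]
      norm_cast
    have hstar : star (t • s) = -(t • s) := by
      rw [hts, star_smul, ha.star_eq,
        show star ((t : ℂ) * Complex.I) = -((t : ℂ) * Complex.I) by
          simp [Complex.ext_iff]]
      exact neg_smul ((t : ℂ) * Complex.I) a
    have hmul : star u * u = 1 := by
      rw [hu, NormedSpace.star_exp, hstar,
        ← NormedSpace.exp_add_of_commute_of_mem_ball (𝕂 := ℂ) ((Commute.refl (t • s)).neg_left)
          ((NormedSpace.expSeries_radius_eq_top ℂ (EuclideanSpace ℂ (Fin n) →L[ℂ] EuclideanSpace ℂ (Fin n))).symm ▸ edist_lt_top _ _)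
          ((NormedSpace.expSeries_radius_eq_top ℂ (EuclideanSpace ℂ (Fin n) →L[ℂ] EuclideanSpace ℂ (Fin n))).symm ▸ edist_lt_top _ _),
        neg_add_cancel, NormedSpace.exp_zero]
    have hn : ‖u‖ * ‖u‖ ≤ 1 := by
      rw [← CStarRing.norm_star_mul_self, hmul]
      exact ContinuousLinearMap.norm_id_le
    nlinarith [norm_nonneg u]
  have hgoal : opNorm A = ‖a‖ := rfl
  have hgoalB : opNorm B = ‖b‖ := rfl
  have hmain : Φ (NormedSpace.exp ((Complex.I * x) • A) * B *
              NormedSpace.exp (-((Complex.I * x) • A)) -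
            B - (Complex.I * x) • (A * B - B * A)) =
      NormedSpace.exp (x • s) * b * NormedSpace.exp (x • (-s)) - b -
        x • (s * b - b * s) := by
    simp only [map_sub, map_mul, map_smul, map_neg, hmap]
    have e1 : ((Complex.I * (x:ℂ)) • (Φ A) : EuclideanSpace ℂ (Fin n) →L[ℂ] EuclideanSpace ℂ (Fin n)) = x • s := by
      rw [hs, ha', mul_comm]
      have h4 := smul_smul (x:ℂ) Complex.I (Φ A)
      rw [← h4]
      norm_cast
    have e2 : ((Complex.I * (x:ℂ)) • (Φ A * Φ B - Φ B * Φ A) : EuclideanSpace ℂ (Fin n) →L[ℂ] EuclideanSpace ℂ (Fin n)) =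
        x • (s * b - b * s) := by
      rw [hs, ha', hb']
      have h1 := smul_mul_assoc Complex.I (Φ A) (Φ B)
      have h2 := mul_smul_comm Complex.I (Φ B) (Φ A)
      have h3 := smul_sub Complex.I (Φ A * Φ B) (Φ B * Φ A)
      rw [h1, h2, ← h3, mul_comm]
      have h4 := smul_smul (x:ℂ) Complex.I (Φ A * Φ B - Φ B * Φ A)
      rw [← h4]
      norm_cast
    have hexp : (NormedSpace.exp : (EuclideanSpace ℂ (Fin n) →L[ℂ] EuclideanSpace ℂ (Fin n)) → (EuclideanSpace ℂ (Fin n) →L[ℂ] EuclideanSpace ℂ (Fin n))) = NormedSpace.exp :=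
      rfl
    have h5 := smul_neg x s
    rw [e1, e2, hexp, ← hb', h5]
  have hLHS : opNorm (NormedSpace.exp ((Complex.I * x) • A) * B *
              NormedSpace.exp (-((Complex.I * x) • A)) -
            B - (Complex.I * x) • (A * B - B * A)) =
      ‖NormedSpace.exp (x • s) * b * NormedSpace.exp (x • (-s)) - b -
        x • (s * b - b * s)‖ := by
    rw [← hmain]
    rfl
  rw [hLHS, hgoal, hgoalB]
  have hnorm : ‖s‖ = ‖a‖ := by
    rw [hs]
    have := norm_smul (α := ℂ) Complex.I a
    rw [this]
    simp
  rcases le_total 0 x with hx | hx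
  · have h2 := key_est s b hU hx
    rwa [hnorm] at h2
  · have hU' : ∀ t : ℝ, ‖NormedSpace.exp (t • (-s))‖ ≤ 1 := by
      intro t
      have h6 := smul_neg t s
      have h7 := neg_smul t s
      rw [h6, ← h7]
      exact hU (-t)
    have h2 := key_est (-s) b hU' (by linarith : (0:ℝ) ≤ -x)
    have e3 := neg_smul_neg x s
    have e4 : (-x) • (- -s) = x • (-s) := by
      rw [neg_neg]
      have h8 := neg_smul x s
      have h9 := smul_neg x s
      rw [← h8] at h9
      exact h9.symm
    have e5 : (-x) • (-s * b - b * -s) = x • (s * b - b * s) := by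
      have hcc : (-s * b - b * -s : EuclideanSpace ℂ (Fin n) →L[ℂ] EuclideanSpace ℂ (Fin n)) = -(s * b - b * s) := by
        have q1 := neg_mul s b
        have q2 := mul_neg b s
        rw [q1, q2]
        abel
      rw [hcc]
      have h10 := smul_neg (-x) (s * b - b * s)
      have h11 := neg_smul x (s * b - b * s)
      rw [h10, h11, neg_neg]
    have e6 := norm_neg s
    have e7 : (-x) ^ 2 = x ^ 2 := by ring
    rw [e3, e4, e5, e6, e7, hnorm] at h2
    exact h2

end main
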